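/- If f and h are probability density functions on ℝ that are symmetric about zero and strictly unimodal at zero (i.e., strictly decreasing on values: f(u2) < f(u1) whenever 0 < u1 < u2, and likewise for h), then their convolution f*h is strictly unimodal at zero: for any u1, u2 with 0 < u1 < u2, (f*h)(u2) < (f*h)(u1). -/

import Mathlib

open MeasureTheory

/-- A continuous, symmetric, strictly unimodal function satisfies `f x < f y`
whenever `|y| < x`. -/
lemma sym_unimodal_lt (f : ℝ → ℝ) (hc : Continuous f) (hs : ∀ x, f (-x) = f x)
    (hu : ∀ u₁ u₂ : ℝ, 0 < u₁ → u₁ < u₂ → f u₂ < f u₁) :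
    ∀ x y : ℝ, |y| < x → f x < f y := by
  intro x y hyx
  have hx : 0 < x := lt_of_le_of_lt (abs_nonneg y) hyx
  rcases eq_or_ne y 0 with rfl | hy
  · have h1 : f x < f (x / 2) := hu _ _ (by linarith) (by linarith)
    have h2 : f (x / 2) ≤ f 0 := by
      have ht : Filter.Tendsto f (nhdsWithin 0 (Set.Ioi 0)) (nhds (f 0)) :=
        (hc.tendsto 0).mono_left nhdsWithin_le_nhds
      refine ge_of_tendsto ht ?_
      have hmem : Set.Iio (x / 2) ∈ nhdsWithin (0 : ℝ) (Set.Ioi 0) :=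
        mem_nhdsWithin_of_mem_nhds (isOpen_Iio.mem_nhds (Set.mem_Iio.mpr (by linarith)))
      filter_upwards [hmem, self_mem_nhdsWithin] with t ht1 ht2
      exact (hu t (x / 2) ht2 ht1).le
    linarith
  · have hy' : 0 < |y| := abs_pos.mpr hy
    have h1 : f x < f |y| := hu _ _ hy' hyx
    rcases le_or_gt 0 y with h | h
    · rwa [abs_of_nonneg h] at h1
    · rw [abs_of_neg h] at h1
      rwa [hs y] at h1

/-- The convolution of two symmetric, strictly unimodal (at zero) probability
densities is strictly unimodal at zero. -/
theorem convolution_strict_unimodal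
    (f h : ℝ → ℝ)
    (hf_cont : Continuous f) (hh_cont : Continuous h)
    (hf_bdd : ∃ M, ∀ x, f x ≤ M) (hh_bdd : ∃ M, ∀ x, h x ≤ M)
    (hf_nonneg : ∀ x, 0 ≤ f x) (hh_nonneg : ∀ x, 0 ≤ h x)
    (hf_int : Integrable f) (hh_int : Integrable h)
    (hf_one : ∫ x, f x = 1) (hh_one : ∫ x, h x = 1)
    (hf_symm : ∀ x, f (-x) = f x) (hh_symm : ∀ x, h (-x) = h x)
    (hf_unimodal : ∀ u₁ u₂ : ℝ, 0 < u₁ → u₁ < u₂ → f u₂ < f u₁)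
    (hh_unimodal : ∀ u₁ u₂ : ℝ, 0 < u₁ → u₁ < u₂ → h u₂ < h u₁) :
    ∀ u₁ u₂ : ℝ, 0 < u₁ → u₁ < u₂ →
      (∫ v, f v * h (u₂ - v)) < (∫ v, f v * h (u₁ - v)) := by
  intro u₁ u₂ hu₁ hu₁₂
  obtain ⟨M, hM⟩ := hh_bdd
  set c : ℝ := (u₁ + u₂) / 2 with hc
  set d : ℝ := (u₂ - u₁) / 2 with hd
  have hcpos : 0 < c := by simp [hc]; linarith
  have hdpos : 0 < d := by simp [hd]; linarith
  -- key pointwise inequalities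
  have fkey := sym_unimodal_lt f hf_cont hf_symm hf_unimodal
  have hkey := sym_unimodal_lt h hh_cont hh_symm hh_unimodal
  -- integrability of the convolution integrands
  have hmul : ∀ u : ℝ, Integrable (fun v => f v * h (u - v)) := by
    intro u
    have hcont : Continuous (fun v : ℝ => h (u - v)) :=
      hh_cont.comp (continuous_const.sub continuous_id)
    have := hf_int.bdd_mul hcont.aestronglyMeasurable
      (c := M) (Filter.Eventually.of_forall fun v => by
        rw [Real.norm_eq_abs, abs_of_nonneg (hh_nonneg _)]; exact hM _)
    exact this.congr (Filter.Eventually.of_forall fun v => mul_comm _ _)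
  -- combine as a single integral
  rw [← sub_pos, ← integral_sub (hmul u₁) (hmul u₂)]
  have e1 : (∫ v, f v * h (u₁ - v) - f v * h (u₂ - v)) =
      ∫ w, f (c + w) * (h (u₁ - (c + w)) - h (u₂ - (c + w))) := by
    rw [integral_add_left_eq_self (fun v => f v * (h (u₁ - v) - h (u₂ - v))) c]
    congr 1; ext v; ring
  rw [e1]
  -- the shifted integrand
  set G : ℝ → ℝ := fun w => f (c + w) * (h (d + w) - h (d - w)) with hG
  have e2 : (∫ w, f (c + w) * (h (u₁ - (c + w)) - h (u₂ - (c + w)))) = ∫ w, G w := by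
    congr 1; ext w
    have h1 : u₁ - (c + w) = -(d + w) := by simp [hc, hd]; ring
    have h2 : u₂ - (c + w) = d - w := by simp [hc, hd]; ring
    rw [h1, h2, hh_symm]
  rw [e2]
  have hG_int : Integrable G := by
    have hfa : Integrable (fun w => f (c + w)) := hf_int.comp_add_left c
    have hcont2 : Continuous (fun w : ℝ => h (d + w) - h (d - w)) :=
      (hh_cont.comp (continuous_const.add continuous_id)).sub
        (hh_cont.comp (continuous_const.sub continuous_id))
    have := hfa.bdd_mul hcont2.aestronglyMeasurable
      (c := 2 * M) (Filter.Eventually.of_forall fun w => by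
        have h1 := hM (d + w); have h2 := hM (d - w)
        have h3 := hh_nonneg (d + w); have h4 := hh_nonneg (d - w)
        rw [Real.norm_eq_abs, abs_le]; constructor <;> nlinarith)
    exact this.congr (Filter.Eventually.of_forall fun w => mul_comm _ _)
  -- split at zero and fold the negative half over
  rw [← intervalIntegral.integral_Iic_add_Ioi hG_int.integrableOn hG_int.integrableOn]
  have e3 : (∫ w in Set.Iic (0:ℝ), G w) = ∫ w in Set.Ioi (0:ℝ), G (-w) := by
    rw [integral_comp_neg_Ioi 0 G, neg_zero]
  rw [e3, ← integral_add ((hG_int.comp_neg).integrableOn) hG_int.integrableOn]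
  -- positivity of the folded integrand on `Ioi 0`
  set φ : ℝ → ℝ := fun w => G (-w) + G w with hφ
  have hφ_pos : ∀ w ∈ Set.Ioi (0:ℝ), 0 < φ w := by
    intro w hw
    simp only [Set.mem_Ioi] at hw
    have hfe : f (c + w) < f (c - w) := by
      have : |c - w| < c + w := by
        rw [abs_lt]; constructor <;> nlinarith
      have := fkey (c + w) (c - w) this
      exact this
    have hhe : h (d + w) < h (d - w) := by
      have : |d - w| < d + w := by
        rw [abs_lt]; constructor <;> nlinarith
      exact hkey (d + w) (d - w) this
    have : φ w = (f (c - w) - f (c + w)) * (h (d - w) - h (d + w)) := by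
      simp only [hφ, hG]
      have h1 : c + -w = c - w := by ring
      have h2 : d + -w = d - w := by ring
      have h3 : d - -w = d + w := by ring
      rw [h1, h2, h3]; ring
    rw [this]
    exact mul_pos (by linarith) (by linarith)
  have hφ_int : IntegrableOn φ (Set.Ioi 0) :=
    ((hG_int.comp_neg).add hG_int).integrableOn
  rw [setIntegral_pos_iff_support_of_nonneg_ae
    (Filter.Eventually.mono (ae_restrict_mem measurableSet_Ioi)
      (fun w hw => (hφ_pos w hw).le)) hφ_int]
  have hsub : Set.Ioi (0:ℝ) ⊆ Function.support φ ∩ Set.Ioi 0 :=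
    fun w hw => ⟨(hφ_pos w hw).ne', hw⟩
  calc (0:ENNReal) < volume (Set.Ioi (0:ℝ)) := by simp
    _ ≤ volume (Function.support φ ∩ Set.Ioi 0) := measure_mono hsub
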